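/- Let m ≥ 1 and τ ∈ ℂ. Let U be an n×n complex unitary matrix with n ≥ 1 such that U^m = τ·1, let α : Fin m → ℂ, and suppose V := Σ_{i=0}^{m−1} α_i U^i is unitary. Then there exists β : Fin m → ℂ such that V = Σ_{i=0}^{m−1} β_i U^i and the τ-twisted circulant matrix C(τ, β) is unitary. -/

import Mathlib

open Matrix Polynomial

/-- The τ-twisted circulant matrix: entry (k, j) equals τ·β_{(j−k) mod m} if j < k,
and β_{(j−k) mod m} if j ≥ k (Fin subtraction is subtraction mod m). -/
def twistedCirculant (m : ℕ) (τ : ℂ) (β : Fin m → ℂ) : Matrix (Fin m) (Fin m) ℂ :=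
  fun k j => if (j : ℕ) < (k : ℕ) then τ * β (j - k) else β (j - k)

lemma exists_omega {m : ℕ} (hm : 1 ≤ m) {τ : ℂ} (hτ : τ ≠ 0) :
    ∃ ω : Fin m → ℂ, Function.Injective ω ∧ ∀ c, ω c ^ m = τ := by
  classical
  set p : ℂ[X] := X ^ m - C τ with hp
  have hm' : (m : ℂ) ≠ 0 := Nat.cast_ne_zero.mpr (by omega)
  have hsep : p.Separable := separable_X_pow_sub_C τ hm' hτ
  have hnodup : p.roots.Nodup := nodup_roots hsep
  have hpne : p ≠ 0 := by
    intro h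
    have := natDegree_X_pow_sub_C (n := m) (r := τ)
    rw [← hp, h] at this
    simp at this; omega
  have hcard : p.roots.toFinset.card = m := by
    rw [Multiset.toFinset_card_of_nodup hnodup]
    have := (IsAlgClosed.card_roots_eq_natDegree (p := p))
    rw [this, hp, natDegree_X_pow_sub_C]
  obtain e := Finset.equivFinOfCardEq hcard
  refine ⟨fun c => (e.symm c : ℂ), ?_, ?_⟩
  · intro a b hab
    have := Subtype.ext (p := fun x => x ∈ p.roots.toFinset) hab
    exact e.symm.injective this
  · intro c
    have hmem : ((e.symm c : ℂ)) ∈ p.roots := Multiset.mem_toFinset.mp (e.symm c).2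
    have h2 : (e.symm c : ℂ) ^ m - τ = 0 := by
      simpa [hp, Polynomial.IsRoot] using (mem_roots hpne).mp hmem
    exact sub_eq_zero.mp h2

noncomputable def tconv (m : ℕ) (τ : ℂ) (δ γ : Fin m → ℂ) : Fin m → ℂ :=
  fun k => ∑ i : Fin m, (if (i : ℕ) ≤ (k : ℕ) then 1 else τ) * δ i * γ (k - i)

lemma coe_sub_fin {m : ℕ} [NeZero m] (k i : Fin m) :
    ((k - i : Fin m) : ℕ) = if (i:ℕ) ≤ (k:ℕ) then (k:ℕ) - (i:ℕ) else (k:ℕ) + m - (i:ℕ) := by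
  have hk := k.isLt; have hi := i.isLt
  rw [Fin.sub_def]
  show (m - (i:ℕ) + (k:ℕ)) % m = _
  by_cases h : (i:ℕ) ≤ (k:ℕ)
  · rw [if_pos h]
    have h2 : (m - (i:ℕ) + (k:ℕ)) = ((k:ℕ) - (i:ℕ)) + m := by omega
    rw [h2, Nat.add_mod_right, Nat.mod_eq_of_lt (by omega)]
  · rw [if_neg h, Nat.mod_eq_of_lt (by omega)]
    omega

lemma key_conv {m : ℕ} [NeZero m] {τ : ℂ} {R : Type*} [Ring R] [Algebra ℂ R]
    (u : R) (hu : u ^ m = τ • 1) (δ γ : Fin m → ℂ) :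
    (∑ i : Fin m, δ i • u ^ (i : ℕ)) * (∑ i : Fin m, γ i • u ^ (i : ℕ))
      = ∑ k : Fin m, tconv m τ δ γ k • u ^ (k : ℕ) := by
  have hrhs : ∑ k : Fin m, tconv m τ δ γ k • u ^ (k : ℕ)
      = ∑ i : Fin m, ∑ k : Fin m,
          ((if (i : ℕ) ≤ (k : ℕ) then 1 else τ) * δ i * γ (k - i)) • u ^ (k : ℕ) := by
    rw [Finset.sum_comm]
    refine Finset.sum_congr rfl fun k _ => ?_
    rw [tconv, Finset.sum_smul]
  rw [Finset.sum_mul_sum, hrhs]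
  refine Finset.sum_congr rfl fun i _ => ?_
  rw [← Equiv.sum_comp (Equiv.addLeft i)
    (fun k => ((if (i : ℕ) ≤ (k : ℕ) then 1 else τ) * δ i * γ (k - i)) • u ^ (k : ℕ))]
  refine Finset.sum_congr rfl fun j _ => ?_
  have e1 : (Equiv.addLeft i) j = i + j := rfl
  rw [e1, add_sub_cancel_left, smul_mul_smul_comm, ← pow_add]
  have hij : ((i + j : Fin m) : ℕ) = ((i:ℕ) + (j:ℕ)) % m := by rw [Fin.add_def]
  have hi := i.isLt; have hj := j.isLt
  by_cases h : (i:ℕ) + (j:ℕ) < m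
  · have hv : ((i + j : Fin m) : ℕ) = (i:ℕ) + (j:ℕ) := by
      rw [hij, Nat.mod_eq_of_lt h]
    rw [hv, if_pos (by omega), one_mul]
  · have hv : ((i + j : Fin m) : ℕ) = (i:ℕ) + (j:ℕ) - m := by
      rw [hij]
      have h2 : (i:ℕ) + (j:ℕ) = ((i:ℕ) + (j:ℕ) - m) + m := by omega
      rw [h2, Nat.add_mod_right, Nat.mod_eq_of_lt (by omega)]
      omega
    rw [hv, if_neg (by omega)]
    have key2 : ∀ a : ℕ, u ^ (a + m) = τ • u ^ a := fun a => by
      rw [pow_add, hu, mul_smul_comm, mul_one]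
    have h5 : (i:ℕ) + (j:ℕ) = ((i:ℕ)+(j:ℕ)-m) + m := by omega
    conv_lhs => rw [h5, key2]
    rw [smul_smul]
    ring_nf

noncomputable def rpow (m : ℕ) (τ : ℂ) (a : ℕ) : Fin m → ℂ :=
  fun j => if (j : ℕ) = a % m then τ ^ (a / m) else 0

lemma sum_rpow {m : ℕ} [NeZero m] {τ : ℂ} {R : Type*} [Ring R] [Algebra ℂ R]
    (u : R) (hu : u ^ m = τ • 1) (a : ℕ) :
    ∑ j : Fin m, rpow m τ a j • u ^ (j : ℕ) = u ^ a := by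
  have hma : a = m * (a / m) + a % m := (Nat.div_add_mod a m).symm
  have h0 : u ^ a = τ ^ (a / m) • u ^ (a % m) := by
    conv_lhs => rw [hma]
    rw [pow_add, pow_mul, hu, _root_.smul_pow, one_pow, smul_mul_assoc, one_mul]
  rw [h0]
  rw [Finset.sum_eq_single (⟨a % m, Nat.mod_lt _ (NeZero.pos m)⟩ : Fin m)]
  · simp [rpow]
  · intro j _ hj
    have : (j : ℕ) ≠ a % m := by
      intro h; apply hj; exact Fin.ext h
    simp [rpow, this]
  · intro h; exact absurd (Finset.mem_univ _) h

lemma geom_zero {m : ℕ} (hm : 1 ≤ m) {r : ℂ} (hr : r ≠ 1) (hrm : r ^ m = 1) :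
    ∑ j : Fin m, r ^ (j : ℕ) = 0 := by
  rw [Fin.sum_univ_eq_sum_range, geom_sum_eq hr, hrm]
  simp


lemma conj_omega {m : ℕ} (ω : Fin m → ℂ) (habs : ∀ c, ‖ω c‖ = 1) (c : Fin m) :
    (starRingEnd ℂ) (ω c) = (ω c)⁻¹ := by
  refine eq_inv_of_mul_eq_one_left ?_
  have h := Complex.mul_conj' (ω c)
  rw [mul_comm] at h
  rw [h, habs c]
  norm_num

lemma omega_ne_zero {m : ℕ} (ω : Fin m → ℂ) (habs : ∀ c, ‖ω c‖ = 1) (c : Fin m) :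
    ω c ≠ 0 := by
  intro h
  have h2 := habs c
  rw [h] at h2
  simp at h2

lemma GF_eq_one {m : ℕ} [NeZero m] {τ : ℂ} (ω : Fin m → ℂ)
    (hω : ∀ c, ω c ^ m = τ) (hinj : Function.Injective ω)
    (habs : ∀ c, ‖ω c‖ = 1) :
    ((m : ℂ)⁻¹ • (Matrix.of fun (j c : Fin m) => ω c ^ (j : ℕ))ᴴ) *
      (Matrix.of fun (j c : Fin m) => ω c ^ (j : ℕ)) = 1 := by
  ext c c'
  rw [Matrix.smul_mul, Matrix.smul_apply, Matrix.mul_apply]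
  simp only [Matrix.conjTranspose_apply, Matrix.of_apply]
  have hterm : ∀ j : Fin m, star ((ω c) ^ (j:ℕ)) * ω c' ^ (j:ℕ)
      = ((ω c)⁻¹ * ω c') ^ (j:ℕ) := by
    intro j
    rw [star_pow, mul_pow]
    congr 1
    rw [show star (ω c) = (starRingEnd ℂ) (ω c) from rfl, conj_omega ω habs c]
  rw [Finset.sum_congr rfl fun j _ => hterm j]
  by_cases h : c = c'
  · subst h
    rw [inv_mul_cancel₀ (omega_ne_zero ω habs c)]
    simp only [one_pow, Finset.sum_const, Finset.card_univ, Fintype.card_fin,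
      nsmul_eq_mul, mul_one]
    rw [Matrix.one_apply_eq]
    exact inv_mul_cancel₀ (Nat.cast_ne_zero.mpr (NeZero.ne m))
  · have hr1 : (ω c)⁻¹ * ω c' ≠ 1 := by
      intro he
      exact h (hinj ((inv_mul_eq_one₀ (omega_ne_zero ω habs c)).mp he))
    have hrm : ((ω c)⁻¹ * ω c') ^ m = 1 := by
      rw [mul_pow, inv_pow, hω, hω]
      have hτ : τ ≠ 0 := by
        rw [← hω c]; exact pow_ne_zero _ (omega_ne_zero ω habs c)
      exact inv_mul_cancel₀ hτ
    rw [geom_zero (NeZero.pos m) hr1 hrm]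
    simp [Matrix.one_apply_ne h]


lemma circ_mul_F {m : ℕ} [NeZero m] {τ : ℂ} (ω : Fin m → ℂ)
    (hω : ∀ c, ω c ^ m = τ) (β : Fin m → ℂ) :
    twistedCirculant m τ β * (Matrix.of fun (j c : Fin m) => ω c ^ (j : ℕ))
      = (Matrix.of fun (j c : Fin m) => ω c ^ (j : ℕ))
        * Matrix.diagonal (fun c => ∑ i : Fin m, β i * ω c ^ (i : ℕ)) := by
  ext k c
  rw [Matrix.mul_apply, Matrix.mul_diagonal, Matrix.of_apply, Finset.mul_sum]
  rw [← Equiv.sum_comp (Equiv.addLeft k)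
    (fun j => twistedCirculant m τ β k j * (Matrix.of fun (j c : Fin m) => ω c ^ (j : ℕ)) j c)]
  refine Finset.sum_congr rfl fun i _ => ?_
  have e1 : (Equiv.addLeft k) i = k + i := rfl
  rw [e1]
  simp only [Matrix.of_apply, twistedCirculant, add_sub_cancel_left]
  have hk := k.isLt; have hi := i.isLt
  have hv : ((k + i : Fin m) : ℕ) = ((k:ℕ) + (i:ℕ)) % m := by rw [Fin.add_def]
  by_cases h : (k:ℕ) + (i:ℕ) < m
  · have hv2 : ((k + i : Fin m) : ℕ) = (k:ℕ) + (i:ℕ) := by rw [hv, Nat.mod_eq_of_lt h]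
    rw [hv2, if_neg (by omega), pow_add]
    ring
  · have hv2 : ((k + i : Fin m) : ℕ) = (k:ℕ) + (i:ℕ) - m := by
      rw [hv]
      have h2 : (k:ℕ) + (i:ℕ) = ((k:ℕ) + (i:ℕ) - m) + m := by omega
      rw [h2, Nat.add_mod_right, Nat.mod_eq_of_lt (by omega)]
      omega
    rw [hv2, if_pos (by omega)]
    have h3 : (k:ℕ) + (i:ℕ) = ((k:ℕ) + (i:ℕ) - m) + m := by omega
    have h4 : ω c ^ ((k:ℕ) + (i:ℕ)) = ω c ^ ((k:ℕ) + (i:ℕ) - m) * τ := by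
      conv_lhs => rw [h3, pow_add, hω c]
    have h5 : ω c ^ (k:ℕ) * (β i * ω c ^ (i:ℕ)) = β i * ω c ^ ((k:ℕ) + (i:ℕ)) := by
      rw [pow_add]; ring
    rw [h5, h4]
    ring

lemma twc_unitary {m : ℕ} [NeZero m] {τ : ℂ} (ω : Fin m → ℂ)
    (hω : ∀ c, ω c ^ m = τ) (hinj : Function.Injective ω)
    (habs : ∀ c, ‖ω c‖ = 1) (β : Fin m → ℂ)
    (hg : ∀ c, (starRingEnd ℂ) (∑ i : Fin m, β i * ω c ^ (i : ℕ))
        * (∑ i : Fin m, β i * ω c ^ (i : ℕ)) = 1) :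
    twistedCirculant m τ β * (twistedCirculant m τ β)ᴴ = 1 ∧
      (twistedCirculant m τ β)ᴴ * twistedCirculant m τ β = 1 := by
  set F : Matrix (Fin m) (Fin m) ℂ := Matrix.of fun (j c : Fin m) => ω c ^ (j : ℕ) with hF
  set G : Matrix (Fin m) (Fin m) ℂ := (m : ℂ)⁻¹ • Fᴴ with hG
  set d : Fin m → ℂ := fun c => ∑ i : Fin m, β i * ω c ^ (i : ℕ) with hd
  have hm0 : (m : ℂ) ≠ 0 := Nat.cast_ne_zero.mpr (NeZero.ne m)
  have hGF : G * F = 1 := GF_eq_one ω hω hinj habs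
  have hFG : F * G = 1 := mul_eq_one_comm.mp hGF
  have hdec : twistedCirculant m τ β = F * Matrix.diagonal d * G := by
    calc twistedCirculant m τ β = twistedCirculant m τ β * (F * G) := by rw [hFG, mul_one]
    _ = (twistedCirculant m τ β * F) * G := by rw [mul_assoc]
    _ = F * Matrix.diagonal d * G := by rw [circ_mul_F ω hω β]
  have hGH : Gᴴ = (m : ℂ)⁻¹ • F := by
    rw [hG, Matrix.conjTranspose_smul, Matrix.conjTranspose_conjTranspose]
    congr 1
    simp
  have hFH : Fᴴ = (m : ℂ) • G := by
    rw [hG, smul_smul, mul_inv_cancel₀ hm0, one_smul]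
  have hadj : (twistedCirculant m τ β)ᴴ = F * Matrix.diagonal (star d) * G := by
    rw [hdec, Matrix.conjTranspose_mul, Matrix.conjTranspose_mul, hGH, hFH,
      Matrix.diagonal_conjTranspose]
    rw [Matrix.smul_mul, Matrix.mul_smul, Matrix.mul_smul, smul_smul,
      inv_mul_cancel₀ hm0, one_smul, ← mul_assoc]
  have hprod : ∀ A B : Fin m → ℂ, (F * Matrix.diagonal A * G) * (F * Matrix.diagonal B * G)
      = F * Matrix.diagonal (A * B) * G := by
    intro A B
    calc (F * Matrix.diagonal A * G) * (F * Matrix.diagonal B * G)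
        = F * Matrix.diagonal A * (G * F) * (Matrix.diagonal B * G) := by
          simp only [mul_assoc]
      _ = F * (Matrix.diagonal A * Matrix.diagonal B) * G := by
          rw [hGF, mul_one]; simp only [mul_assoc]
      _ = F * Matrix.diagonal (A * B) * G := by
          rw [Matrix.diagonal_mul_diagonal]
          rfl
  have hdd : (d * star d : Fin m → ℂ) = 1 := by
    funext c
    have h := hg c
    rw [mul_comm] at h
    exact h
  have hdd' : (star d * d : Fin m → ℂ) = 1 := by
    rw [mul_comm] at hdd; exact hdd
  have hD1 : Matrix.diagonal (1 : Fin m → ℂ) = 1 := Matrix.diagonal_one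
  constructor
  · rw [hadj, hdec, hprod, hdd, hD1, mul_one, hFG]
  · rw [hadj, hdec, hprod, hdd', hD1, mul_one, hFG]
noncomputable def Phi {R : Type*} [Ring R] [Algebra ℂ R] {m : ℕ} (v : Fin m → R) :
    (Fin m → ℂ) →ₗ[ℂ] R where
  toFun γ := ∑ i : Fin m, γ i • v i
  map_add' x y := by
    simp [add_smul, Finset.sum_add_distrib]
  map_smul' s x := by
    simp [Finset.smul_sum, smul_smul]

@[simp] lemma Phi_apply {R : Type*} [Ring R] [Algebra ℂ R] {m : ℕ} (v : Fin m → R)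
    (γ : Fin m → ℂ) : Phi v γ = ∑ i : Fin m, γ i • v i := rfl

lemma sum_gamma_dagger {m : ℕ} [NeZero m] {τ : ℂ} {R : Type*} [Ring R] [Algebra ℂ R]
    (u : R) (hu : u ^ m = τ • 1) (α : Fin m → ℂ) :
    ∑ j : Fin m, (∑ i : Fin m, (starRingEnd ℂ) (α i) * ((starRingEnd ℂ) τ) ^ (i:ℕ)
        * rpow m τ ((i:ℕ) * (m-1)) j) • u ^ (j:ℕ)
      = ∑ i : Fin m, ((starRingEnd ℂ) (α i) * ((starRingEnd ℂ) τ) ^ (i:ℕ))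
          • u ^ ((i:ℕ) * (m-1)) := by
  have h1 : ∀ j : Fin m, (∑ i : Fin m, (starRingEnd ℂ) (α i) * ((starRingEnd ℂ) τ) ^ (i:ℕ)
        * rpow m τ ((i:ℕ)*(m-1)) j) • u ^ (j:ℕ)
      = ∑ i : Fin m, ((starRingEnd ℂ) (α i) * ((starRingEnd ℂ) τ) ^ (i:ℕ))
          • (rpow m τ ((i:ℕ)*(m-1)) j • u ^ (j:ℕ)) := by
    intro j
    rw [Finset.sum_smul]
    exact Finset.sum_congr rfl fun i _ => mul_smul _ _ _
  rw [Finset.sum_congr rfl fun j _ => h1 j, Finset.sum_comm]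
  refine Finset.sum_congr rfl fun i _ => ?_
  rw [← Finset.smul_sum, sum_rpow u hu]

lemma real_pow_eq_one {a : ℝ} (ha : 0 ≤ a) {m : ℕ} (hm : 1 ≤ m) (h : a ^ m = 1) : a = 1 := by
  rcases lt_trichotomy a 1 with h1|h1|h1
  · have h2 : a ^ m < 1 := pow_lt_one₀ ha h1 (by omega)
    linarith
  · exact h1
  · have h2 : 1 < a ^ m := one_lt_pow₀ h1 (by omega)
    linarith


theorem stmt10 {n m : ℕ} (hn : 1 ≤ n) (hm : 1 ≤ m) (τ : ℂ) (α : Fin m → ℂ)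
    (U : Matrix (Fin n) (Fin n) ℂ)
    (hU : U * Uᴴ = 1 ∧ Uᴴ * U = 1)
    (hUm : U ^ m = τ • (1 : Matrix (Fin n) (Fin n) ℂ))
    (V : Matrix (Fin n) (Fin n) ℂ)
    (hV : V = ∑ i : Fin m, α i • U ^ (i : ℕ))
    (hVunitary : V * Vᴴ = 1 ∧ Vᴴ * V = 1) :
    ∃ β : Fin m → ℂ,
      V = ∑ i : Fin m, β i • U ^ (i : ℕ) ∧
      twistedCirculant m τ β * (twistedCirculant m τ β)ᴴ = 1 ∧
      (twistedCirculant m τ β)ᴴ * twistedCirculant m τ β = 1 := by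
  classical
  have : NeZero m := ⟨by omega⟩
  -- step 1 : star τ * τ = 1
  have hττ : (starRingEnd ℂ) τ * τ = 1 := by
    have hUmem : U ∈ unitary (Matrix (Fin n) (Fin n) ℂ) := by
      constructor
      · rw [Matrix.star_eq_conjTranspose]; exact hU.2
      · rw [Matrix.star_eq_conjTranspose]; exact hU.1
    have h1 : star (U ^ m) * U ^ m = 1 := (pow_mem hUmem m).1
    rw [hUm, star_smul, star_one, smul_mul_smul_comm, one_mul] at h1
    have h2 := congrFun (congrFun h1 ⟨0, by omega⟩) ⟨0, by omega⟩
    simpa [Matrix.smul_apply, Matrix.one_apply] using h2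
  have hτ0 : τ ≠ 0 := by
    intro h; rw [h, mul_zero] at hττ; exact zero_ne_one hττ
  have habsτ : ‖τ‖ = 1 := by
    refine real_pow_eq_one (norm_nonneg τ) (by norm_num : 1 ≤ 2) ?_
    have h3 := congrArg (‖·‖) hττ
    rw [norm_mul, Complex.norm_conj, norm_one] at h3
    rw [sq]; exact h3
  obtain ⟨ω, hinj, hω⟩ := exists_omega hm hτ0
  have habs : ∀ c, ‖ω c‖ = 1 := by
    intro c
    refine real_pow_eq_one (norm_nonneg _) hm ?_
    rw [← norm_pow, hω c, habsτ]
  have hu : ∀ c, ω c ^ m = τ • (1 : ℂ) := by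
    intro c; rw [smul_eq_mul, mul_one, hω c]
  -- algebra maps
  set ΦU : (Fin m → ℂ) →ₗ[ℂ] Matrix (Fin n) (Fin n) ℂ :=
    Phi (fun i : Fin m => U ^ (i : ℕ)) with hΦUdef
  set E : (Fin m → ℂ) →ₗ[ℂ] (Fin m → ℂ) :=
    LinearMap.pi (fun c => Phi (fun i : Fin m => ω c ^ (i : ℕ))) with hEdef
  have hΦapp : ∀ γ, ΦU γ = ∑ i : Fin m, γ i • U ^ (i : ℕ) := fun γ => rfl
  have hEapp : ∀ γ c, E γ c = ∑ i : Fin m, γ i • ω c ^ (i : ℕ) := fun γ c => rfl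
  have hΦkey : ∀ δ γ, ΦU δ * ΦU γ = ΦU (tconv m τ δ γ) := by
    intro δ γ
    rw [hΦapp, hΦapp, hΦapp]
    exact key_conv U hUm δ γ
  have hEkey : ∀ δ γ c, E δ c * E γ c = E (tconv m τ δ γ) c := by
    intro δ γ c
    rw [hEapp, hEapp, hEapp]
    exact key_conv (ω c) (hu c) δ γ
  have hVΦ : ΦU α = V := by rw [hΦapp, hV]
  -- U conjugate transpose
  have hUH : Uᴴ = (starRingEnd ℂ) τ • U ^ (m - 1) := by
    have hUinv : U * ((starRingEnd ℂ) τ • U ^ (m - 1)) = 1 := by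
      rw [Matrix.mul_smul, ← pow_succ']
      have hm1 : m - 1 + 1 = m := by omega
      rw [hm1, hUm, smul_smul, hττ, one_smul]
    calc Uᴴ = Uᴴ * 1 := (mul_one _).symm
      _ = Uᴴ * (U * ((starRingEnd ℂ) τ • U ^ (m - 1))) := by rw [hUinv]
      _ = (Uᴴ * U) * ((starRingEnd ℂ) τ • U ^ (m - 1)) := by rw [mul_assoc]
      _ = (starRingEnd ℂ) τ • U ^ (m - 1) := by rw [hU.2, one_mul]
  -- gamma dagger
  set γd : Fin m → ℂ := fun j => ∑ i : Fin m,
    (starRingEnd ℂ) (α i) * ((starRingEnd ℂ) τ) ^ (i:ℕ) * rpow m τ ((i:ℕ) * (m-1)) j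
    with hγddef
  have hVH : Vᴴ = ΦU γd := by
    have step1 : Vᴴ = ∑ i : Fin m,
        ((starRingEnd ℂ) (α i) * ((starRingEnd ℂ) τ) ^ (i:ℕ)) • U ^ ((i:ℕ) * (m-1)) := by
      rw [hV, Matrix.conjTranspose_sum]
      refine Finset.sum_congr rfl fun i _ => ?_
      rw [Matrix.conjTranspose_smul, Matrix.conjTranspose_pow, hUH, _root_.smul_pow,
        ← pow_mul, smul_smul, Nat.mul_comm (m-1) (i:ℕ)]
      rfl
    rw [step1, hΦapp, hγddef]
    exact (sum_gamma_dagger U hUm α).symm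
  have hEγd : ∀ c, E γd c = (starRingEnd ℂ) (E α c) := by
    intro c
    rw [hEapp, hγddef, sum_gamma_dagger (ω c) (hu c) α, hEapp, map_sum]
    refine Finset.sum_congr rfl fun i _ => ?_
    rw [smul_eq_mul, smul_eq_mul, _root_.map_mul, _root_.map_pow]
    have hkey : ((starRingEnd ℂ) τ) ^ (i:ℕ) * ω c ^ ((i:ℕ) * (m-1))
        = ((starRingEnd ℂ) (ω c)) ^ (i:ℕ) := by
      rw [Nat.mul_comm (i:ℕ) (m-1), pow_mul, ← mul_pow]
      congr 1
      rw [conj_omega ω habs c]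
      refine eq_inv_of_mul_eq_one_left ?_
      have h5 : ω c ^ (m-1) * ω c = τ := by
        rw [← pow_succ]
        have hm1 : m - 1 + 1 = m := by omega
        rw [hm1, hω c]
      rw [mul_assoc, h5, hττ]
    rw [mul_assoc, hkey]
  -- Fourier matrices
  set F : Matrix (Fin m) (Fin m) ℂ := Matrix.of fun (j c : Fin m) => ω c ^ (j : ℕ) with hF
  set G : Matrix (Fin m) (Fin m) ℂ := (m : ℂ)⁻¹ • Fᴴ with hG
  have hGF : G * F = 1 := GF_eq_one ω hω hinj habs
  have hFG : F * G = 1 := mul_eq_one_comm.mp hGF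
  have hEmv : ∀ γ : Fin m → ℂ, E γ = Fᵀ.mulVec γ := by
    intro γ; funext c
    rw [hEapp]
    simp only [Matrix.mulVec, dotProduct, Matrix.transpose_apply, hF, Matrix.of_apply]
    exact Finset.sum_congr rfl fun i _ => by rw [smul_eq_mul, mul_comm]
  have hEG : ∀ x : Fin m → ℂ, E (Gᵀ.mulVec x) = x := by
    intro x
    rw [hEmv, Matrix.mulVec_mulVec, ← Matrix.transpose_mul, hGF, Matrix.transpose_one,
      Matrix.one_mulVec]
  have hEinj : ∀ γ δ : Fin m → ℂ, E γ = E δ → γ = δ := by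
    intro γ δ h
    have h2 := congrArg (Gᵀ.mulVec) h
    rw [hEmv, hEmv, Matrix.mulVec_mulVec, Matrix.mulVec_mulVec, ← Matrix.transpose_mul, hFG,
      Matrix.transpose_one, Matrix.one_mulVec, Matrix.one_mulVec] at h2
    exact h2
  -- single 0
  have hΦ1 : ΦU (Pi.single (0 : Fin m) 1) = 1 := by
    rw [hΦapp, Finset.sum_eq_single (0 : Fin m)]
    · simp
    · intro j _ hj; rw [Pi.single_eq_of_ne hj, zero_smul]
    · intro h; exact absurd (Finset.mem_univ _) h
  have hE1 : ∀ c, E (Pi.single (0 : Fin m) 1) c = 1 := by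
    intro c
    rw [hEapp, Finset.sum_eq_single (0 : Fin m)]
    · simp
    · intro j _ hj; rw [Pi.single_eq_of_ne hj, zero_smul]
    · intro h; exact absurd (Finset.mem_univ _) h
  -- the vanishing predicate
  set P : Fin m → Prop := fun c => ∀ γ : Fin m → ℂ, ΦU γ = 0 → E γ c = 0 with hPdef
  set d : Fin m → ℂ := fun c => E α c with hddef
  set g : Fin m → ℂ := fun c => if P c then d c else 1 with hgdef
  -- modulus one on the vanishing set
  have hPd : ∀ c, P c → (starRingEnd ℂ) (d c) * d c = 1 := by
    intro c hc
    have hΦγ0 : ΦU (tconv m τ γd α - Pi.single (0:Fin m) 1) = 0 := by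
      rw [map_sub, ← hΦkey, ← hVH, hVΦ, hΦ1, hVunitary.2, sub_self]
    have h5 := hc _ hΦγ0
    rw [map_sub] at h5
    have h6 : E (tconv m τ γd α) c - E (Pi.single (0:Fin m) 1) c = 0 := h5
    rw [hE1 c, sub_eq_zero] at h6
    rw [← hEkey, hEγd] at h6
    exact h6
  -- eta functions
  have hηex : ∀ c : Fin m, ∃ e : Fin m → ℂ, ΦU e = 0 ∧
      E e = (fun c' => if P c then (0:ℂ) else (Pi.single c (1:ℂ) : Fin m → ℂ) c') := by
    intro c
    by_cases hc : P c
    · refine ⟨0, map_zero _, ?_⟩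
      funext c'
      rw [map_zero]
      show (0:ℂ) = _
      rw [if_pos hc]
    · have hcP : ¬ P c := hc
      simp only [hPdef] at hc
      push_neg at hc
      obtain ⟨γc, hγc0, hγcc⟩ := hc
      refine ⟨(E γc c)⁻¹ • tconv m τ (Gᵀ.mulVec (Pi.single c 1)) γc, ?_, ?_⟩
      · rw [_root_.map_smul, ← hΦkey, hγc0, mul_zero, smul_zero]
      · funext c'
        rw [_root_.map_smul, Pi.smul_apply, ← hEkey, hEG, smul_eq_mul]
        by_cases h7 : c' = c
        · subst h7
          rw [Pi.single_eq_same, one_mul, inv_mul_cancel₀ hγcc, if_neg hcP]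
        · rw [Pi.single_eq_of_ne h7, zero_mul, mul_zero, if_neg hcP]
  choose η hη0 hη1 using hηex
  set γ2 : Fin m → ℂ := ∑ c : Fin m, (g c - d c) • η c with hγ2def
  have hΦγ2 : ΦU γ2 = 0 := by
    rw [hγ2def, _root_.map_sum]
    refine Finset.sum_eq_zero fun c _ => ?_
    rw [_root_.map_smul, hη0 c, smul_zero]
  have hEγ2 : E γ2 = g - d := by
    funext c'
    rw [hγ2def, _root_.map_sum, Finset.sum_apply]
    have hterm : ∀ c : Fin m, E ((g c - d c) • η c) c'
        = (g c - d c) * (if P c then (0:ℂ) else (Pi.single c (1:ℂ) : Fin m → ℂ) c') := by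
      intro c
      rw [_root_.map_smul, hη1 c]
      rfl
    rw [Finset.sum_congr rfl fun c _ => hterm c, Finset.sum_eq_single c']
    · by_cases h8 : P c'
      · rw [if_pos h8, mul_zero, Pi.sub_apply]
        show (0:ℂ) = (if P c' then d c' else 1) - d c'
        rw [if_pos h8, sub_self]
      · rw [if_neg h8, Pi.single_eq_same, mul_one, Pi.sub_apply]
    · intro c _ hc
      by_cases h8 : P c
      · rw [if_pos h8, mul_zero]
      · rw [if_neg h8, Pi.single_eq_of_ne (Ne.symm hc), mul_zero]
    · intro h; exact absurd (Finset.mem_univ _) h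
  set β : Fin m → ℂ := Gᵀ.mulVec g with hβdef
  have hEβ : E β = g := hEG g
  have hβα : β = α + γ2 := by
    apply hEinj
    rw [map_add, hEβ, hEγ2]
    funext c
    rw [Pi.add_apply, Pi.sub_apply]
    show g c = E α c + (g c - d c)
    show g c = E α c + (g c - E α c)
    ring
  have hΦβ : ΦU β = V := by
    rw [hβα, map_add, hVΦ, hΦγ2, add_zero]
  have hgmod : ∀ c, (starRingEnd ℂ) (∑ i : Fin m, β i * ω c ^ (i:ℕ))
      * (∑ i : Fin m, β i * ω c ^ (i:ℕ)) = 1 := by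
    intro c
    have h9 : (∑ i : Fin m, β i * ω c ^ (i:ℕ)) = E β c := by
      rw [hEapp]
      exact Finset.sum_congr rfl fun i _ => (smul_eq_mul ..).symm
    rw [h9, hEβ]
    show (starRingEnd ℂ) (if P c then d c else 1) * (if P c then d c else 1) = 1
    by_cases h8 : P c
    · rw [if_pos h8]
      exact hPd c h8
    · rw [if_neg h8]
      simp
  obtain ⟨h10, h11⟩ := twc_unitary ω hω hinj habs β hgmod
  refine ⟨β, ?_, h10, h11⟩
  rw [← hΦβ, hΦapp]
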